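/- Let q = p^m be a power of a prime p, let n be a positive integer with n ≡ −2 (mod p), let a ∈ F_{q²} satisfy a^{q+1} = −1, and let L be an n×n unitary matrix over F_{q²}. Then the code generated by the n×2n block matrix G = (Jₙ + Iₙ | aL) is a Hermitian self-dual code of length 2n and F_{q²}-dimension n. -/

import Mathlib

open Matrix BigOperators Finset

/-- The Hermitian inner product `x * y = ∑ i, x i * (y i)^q` over `F_{q²}`. -/
def hermInner (q : ℕ) {F : Type} [CommRing F] {ι : Type} [Fintype ι]
    (x y : ι → F) : F :=
  ∑ i, x i * y i ^ q

/-- The Hermitian dual of a set of vectors. -/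
def hermDual (q : ℕ) {F : Type} [CommRing F] {ι : Type} [Fintype ι]
    (C : Set (ι → F)) : Set (ι → F) :=
  {y | ∀ x ∈ C, hermInner q x y = 0}

/-- The code generated by a matrix: the span of its rows. -/
def rowSpan {F : Type} [Field F] {k : ℕ} {ι : Type} (G : Matrix (Fin k) ι F) :
    Submodule F (ι → F) :=
  Submodule.span F (Set.range fun i => G i)
/-- if `n ≡ -2 (mod p)`, `a^{q+1} = -1` and `L` is an `n×n` unitary
matrix over `F_{q²}`, then the code generated by `G = (Jₙ + Iₙ | aL)` is a
Hermitian self-dual code of length `2n` and dimension `n`. -/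
theorem stmt6 (p m q n : ℕ) (hp : p.Prime) (hm : 0 < m) (hq : q = p ^ m)
    (hn : 0 < n) (hnp : (n : ZMod p) = -2)
    (F : Type) [Field F] [Fintype F] (hF : Fintype.card F = q ^ 2)
    (a : F) (ha : a ^ (q + 1) = -1)
    (L : Matrix (Fin n) (Fin n) F) (hL : L * (L.map (· ^ q))ᵀ = 1)
    (G : Matrix (Fin n) (Fin n ⊕ Fin n) F)
    (hG : ∀ i j, G i (Sum.inl j) = (if i = j then 2 else 1) ∧
      G i (Sum.inr j) = a * L i j) :
    (rowSpan G : Set (Fin n ⊕ Fin n → F)) = hermDual q (rowSpan G) ∧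
    Module.finrank F (rowSpan G) = n := by
  classical
  have hq0 : 0 < q := hq ▸ pow_pos hp.pos m
  -- characteristic of F is p
  have h2m : Fintype.card F = p ^ (2 * m) := by
    rw [hF, hq, ← pow_mul, mul_comm]
  have hcharF : CharP F p := by
    have h1 : CharP F (ringChar F) := ringChar.charP F
    have hrp : (ringChar F).Prime := CharP.char_is_prime F (ringChar F)
    obtain ⟨k, _, hk⟩ := FiniteField.card F (ringChar F)
    have hdvd : p ∣ ringChar F := by
      have h2 : p ∣ (ringChar F) ^ (k : ℕ) := by
        rw [← hk, h2m]
        exact dvd_pow_self p (by positivity)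
      exact hp.dvd_of_dvd_pow h2
    have hpe : p = ringChar F := (Nat.prime_dvd_prime_iff_eq hp hrp).mp hdvd
    rw [hpe]; exact h1
  haveI := hcharF
  haveI : ExpChar F p := ExpChar.prime hp
  -- Frobenius facts
  have hσσ : ∀ x : F, (x ^ q) ^ q = x := by
    intro x
    have : q * q = Fintype.card F := by rw [hF]; ring
    rw [← pow_mul, this, FiniteField.pow_card]
  have hσ0 : ∀ x : F, x ^ q = 0 → x = 0 := by
    intro x h
    exact pow_eq_zero_iff hq0.ne' |>.mp h
  have hσsum : ∀ {ι : Type} (s : Finset ι) (f : ι → F),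
      (∑ i ∈ s, f i) ^ q = ∑ i ∈ s, f i ^ q := by
    intro ι s f
    rw [hq]
    exact map_sum (iterateFrobenius F p m) f s
  have h2q : (2 : F) ^ q = 2 := by
    have h12 : ((1 : F) + 1) ^ q = 1 ^ q + 1 ^ q := by
      rw [hq]
      simpa [iterateFrobenius_def] using map_add (iterateFrobenius F p m) (1 : F) 1
    rw [← one_add_one_eq_two, h12, one_pow]
  -- n = -2 in F
  haveI : NeZero p := ⟨hp.pos.ne'⟩
  have hnF : (n : F) = -2 := by
    have hz : ((n + 2 : ℕ) : ZMod p) = 0 := by push_cast [hnp]; ring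
    have hd : p ∣ n + 2 := (ZMod.natCast_eq_zero_iff _ _).mp hz
    have h0 : ((n + 2 : ℕ) : F) = 0 := (CharP.cast_eq_zero_iff F p _).mpr hd
    push_cast at h0
    linear_combination h0
  -- a ≠ 0 and a * a^q = -1
  have haa : a ^ q * a = -1 := by rw [← pow_succ]; exact ha
  have ha0 : a ≠ 0 := by
    intro h
    rw [h, zero_pow hq0.ne', zero_mul] at haa
    exact one_ne_zero (neg_eq_zero.mp haa.symm)
  -- unitary matrix facts
  set M : Matrix (Fin n) (Fin n) F := L.map (· ^ q) with hM
  have hML : Mᵀ * L = 1 := mul_eq_one_comm.mp hL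
  have hLM : Lᵀ * M = 1 := by
    have := congrArg Matrix.transpose hML
    simpa using this
  have hMLt : M * Lᵀ = 1 := mul_eq_one_comm.mp hLM
  -- inner products of rows vanish
  have hLL : ∀ i j, ∑ k, L i k * L j k ^ q = if i = j then 1 else 0 := by
    intro i j
    have := congrFun (congrFun hL i) j
    simpa [Matrix.mul_apply, Matrix.transpose_apply, Matrix.map_apply,
      Matrix.one_apply, hM] using this
  have hrows : ∀ i j, hermInner q (G i) (G j) = 0 := by
    intro i j
    unfold hermInner
    rw [Fintype.sum_sum_type]
    have hleft : ∑ k : Fin n, G i (Sum.inl k) * G j (Sum.inl k) ^ q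
        = if i = j then 1 else 0 := by
      have hterm : ∀ k : Fin n, G i (Sum.inl k) * G j (Sum.inl k) ^ q
          = 1 + ((if i = k then (1:F) else 0) + ((if j = k then (1:F) else 0)
            + (if i = k then (1:F) else 0) * (if j = k then (1:F) else 0))) := by
        intro k
        rw [(hG i k).1, (hG j k).1]
        by_cases h1 : i = k <;> by_cases h2 : j = k <;>
          simp [h1, h2, h2q] <;> ring
      rw [Finset.sum_congr rfl fun k _ => hterm k]
      rw [Finset.sum_add_distrib, Finset.sum_add_distrib, Finset.sum_add_distrib]
      simp only [Finset.sum_const, Finset.card_univ, Fintype.card_fin, nsmul_eq_mul,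
        mul_one, Finset.sum_ite_eq, Finset.mem_univ, if_true, mul_ite, ite_mul,
        one_mul, mul_zero, zero_mul, mul_one]
      rw [hnF]
      by_cases h : i = j <;> simp [h, eq_comm] <;> ring
    have hright : ∑ k : Fin n, G i (Sum.inr k) * G j (Sum.inr k) ^ q
        = if i = j then -1 else 0 := by
      have hterm : ∀ k : Fin n, G i (Sum.inr k) * G j (Sum.inr k) ^ q
          = (a ^ q * a) * (L i k * L j k ^ q) := by
        intro k
        rw [(hG i k).2, (hG j k).2, mul_pow]
        ring
      rw [Finset.sum_congr rfl fun k _ => hterm k, ← Finset.mul_sum, hLL, haa]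
      by_cases h : i = j <;> simp [h]
    rw [hleft, hright]
    by_cases h : i = j <;> simp [h]
  -- the conjugated generator matrix and the kernel submodule
  set σG : Matrix (Fin n) (Fin n ⊕ Fin n) F := G.map (· ^ q) with hσG
  set D : Submodule F (Fin n ⊕ Fin n → F) := LinearMap.ker σG.mulVecLin with hD
  have hbridge : ∀ (y : Fin n ⊕ Fin n → F) (i : Fin n),
      σG.mulVec y i = (hermInner q (G i) y) ^ q := by
    intro y i
    unfold hermInner
    rw [hσsum]
    simp only [Matrix.mulVec, dotProduct, Matrix.map_apply, hσG]
    refine Finset.sum_congr rfl fun k _ => ?_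
    rw [mul_pow, hσσ]
  have hker : ∀ y, y ∈ D ↔ ∀ i, hermInner q (G i) y = 0 := by
    intro y
    rw [hD, LinearMap.mem_ker]
    constructor
    · intro h i
      have := congrFun h i
      rw [Matrix.mulVecLin_apply] at this
      exact hσ0 _ ((hbridge y i) ▸ this)
    · intro h
      funext i
      rw [Matrix.mulVecLin_apply, hbridge, h i, zero_pow hq0.ne']
      rfl
  have hle : rowSpan G ≤ D := by
    rw [rowSpan, Submodule.span_le]
    rintro x ⟨j, rfl⟩
    exact (hker _).mpr fun i => hrows i j
  -- the Hermitian dual equals D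
  have hdualset : hermDual q ((rowSpan G : Set (Fin n ⊕ Fin n → F))) = (D : Set _) := by
    ext y
    constructor
    · intro hy
      exact (hker y).mpr fun i => hy (G i) (Submodule.subset_span ⟨i, rfl⟩)
    · intro hy x hx
      have hy' : ∀ i, hermInner q (G i) y = 0 := (hker y).mp hy
      induction hx using Submodule.span_induction with
      | mem x h => obtain ⟨i, rfl⟩ := h; exact hy' i
      | zero => simp [hermInner]
      | add x z hx hz ihx ihz =>
        unfold hermInner at *
        have hadd : ∑ k, (x + z) k * y k ^ q
            = (∑ k, x k * y k ^ q) + ∑ k, z k * y k ^ q := by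
          rw [← Finset.sum_add_distrib]
          exact Finset.sum_congr rfl fun k _ => by simp [add_mul]
        rw [hadd, ihx, ihz, add_zero]
      | smul c x hx ih =>
        unfold hermInner at *
        have hs : ∑ k, (c • x) k * y k ^ q = c * ∑ k, x k * y k ^ q := by
          rw [Finset.mul_sum]
          exact Finset.sum_congr rfl fun k _ => by simp [mul_assoc]
        rw [hs, ih, mul_zero]
  -- surjectivity of mulVec σG
  have haq : a ^ q ≠ 0 := pow_ne_zero q ha0
  have hw : ∀ v : Fin n → F, σG.mulVec (Sum.elim 0 v) = a ^ q • M.mulVec v := by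
    intro v
    funext i
    simp only [Matrix.mulVec, dotProduct, Fintype.sum_sum_type, Sum.elim_inl,
      Sum.elim_inr, Pi.zero_apply, mul_zero, Finset.sum_const_zero, zero_add,
      Pi.smul_apply, smul_eq_mul, Finset.mul_sum]
    refine Finset.sum_congr rfl fun k _ => ?_
    have hσr : σG i (Sum.inr k) = a ^ q * M i k := by
      simp only [hσG, Matrix.map_apply, (hG i k).2, mul_pow, hM]
    rw [hσr]; ring
  have hsurj : Function.Surjective σG.mulVecLin := by
    intro z
    refine ⟨Sum.elim 0 (Lᵀ.mulVec ((a ^ q)⁻¹ • z)), ?_⟩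
    rw [Matrix.mulVecLin_apply, hw, Matrix.mulVec_mulVec, hMLt, Matrix.one_mulVec,
      smul_smul, mul_inv_cancel₀ haq, one_smul]
  -- dimension of D
  have hDrank : Module.finrank F D = n := by
    have h1 := LinearMap.finrank_range_add_finrank_ker σG.mulVecLin
    rw [LinearMap.range_eq_top.mpr hsurj] at h1
    rw [finrank_top, Module.finrank_fintype_fun_eq_card,
      Module.finrank_fintype_fun_eq_card, Fintype.card_sum, Fintype.card_fin] at h1
    rw [hD]
    omega
  -- rows of G are linearly independent
  have hli : LinearIndependent F (fun i => G i) := by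
    rw [Fintype.linearIndependent_iff]
    intro c hc
    have hcL : ∀ j, (Matrix.vecMul c L) j = 0 := by
      intro j
      have h1 := congrFun hc (Sum.inr j)
      simp only [Finset.sum_apply, Pi.smul_apply, smul_eq_mul, Pi.zero_apply] at h1
      have h2 : ∑ i, c i * (a * L i j) = a * ∑ i, c i * L i j := by
        rw [Finset.mul_sum]; exact Finset.sum_congr rfl fun i _ => by ring
      have h3 : ∑ i, c i * G i (Sum.inr j) = ∑ i, c i * (a * L i j) :=
        Finset.sum_congr rfl fun i _ => by rw [(hG i j).2]
      have h4 : a * ∑ i, c i * L i j = 0 := by rw [← h2, ← h3, h1]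
      have h5 : ∑ i, c i * L i j = 0 := by
        rcases mul_eq_zero.mp h4 with h | h
        · exact absurd h ha0
        · exact h
      simpa [Matrix.vecMul, dotProduct] using h5
    have hc0 : Matrix.vecMul c L = 0 := funext hcL
    intro i
    have := congrArg (fun v => Matrix.vecMul v Mᵀ) hc0
    simp only [Matrix.vecMul_vecMul, hL, Matrix.vecMul_one, Matrix.zero_vecMul] at this
    exact congrFun this i
  have hGrank : Module.finrank F (rowSpan G) = n := by
    rw [rowSpan, finrank_span_eq_card hli, Fintype.card_fin]
  -- conclude
  have heq : rowSpan G = D := by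
    refine Submodule.eq_of_le_of_finrank_le hle ?_
    rw [hDrank, hGrank]
  constructor
  · rw [hdualset, heq]
  · exact hGrank
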